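/- Let F be a class of mappings from X into the closed unit ball B of ℝⁿ, each having an (η, ε)-unique k-means solution on X. Then the covering numbers satisfy N(H^F, d_{L1}^X, 4ε) ≤ k! · ( N(F, d_{L1}^X, η/12) )², where on binary-valued functions d_{L1}^X(h, h') = (1/|X|) Σ_{x∈X} |h(x) − h'(x)|. -/

import Mathlib

open scoped BigOperators symmDiff RealInnerProductSpace

noncomputable section
set_option linter.unusedSectionVars false
set_option maxHeartbeats 1000000


/-- Euclidean space `ℝ^n`. -/
abbrev Euc (n : ℕ) : Type := EuclideanSpace ℝ (Fin n)

variable {X : Type*} [Fintype X] [DecidableEq X] {n k : ℕ}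

/-- `C` is a `k`-clustering of `X`: an ordered tuple of pairwise disjoint subsets covering `X`. -/
def IsClustering (k : ℕ) (C : Fin k → Finset X) : Prop :=
  (∀ i j, i ≠ j → Disjoint (C i) (C j)) ∧ Finset.univ.biUnion C = Finset.univ

/-- Sample-based clustering difference `Δ_S`. -/
def clusterDiffOn (k : ℕ) (S : Finset X) (C₁ C₂ : Fin k → Finset X) : ℝ :=
  ⨅ σ : Equiv.Perm (Fin k),
    (1 / (S.card : ℝ)) * ∑ i, (((C₁ i ∩ S) ∆ (C₂ (σ i) ∩ S)).card : ℝ)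

/-- Clustering difference `Δ_X`. -/
def clusterDiff (k : ℕ) (C₁ C₂ : Fin k → Finset X) : ℝ :=
  clusterDiffOn k Finset.univ C₁ C₂

/-- k-means cost of `X` under mapping `f` with a `k`-tuple of centers `μ`. -/
def costCenters (k : ℕ) (f : X → Euc n) (μ : Fin k → Euc n) : ℝ :=
  (1 / (Fintype.card X : ℝ)) * ∑ x, ⨅ j : Fin k, ‖f x - μ j‖ ^ 2

/-- k-means cost of a clustering `C` under `f`, with per-cluster optimal centers. -/
def costClustering (k : ℕ) (f : X → Euc n) (C : Fin k → Finset X) : ℝ :=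
  (1 / (Fintype.card X : ℝ)) * ∑ i, ⨅ μ : Euc n, ∑ x ∈ C i, ‖f x - μ‖ ^ 2

/-- Index of a nearest center to `f x`, ties broken by smallest index. -/
def nearestIdx [NeZero k] (f : X → Euc n) (μ : Fin k → Euc n) (x : X) : Fin k :=
  (Finset.univ.filter fun j => ∀ l, ‖f x - μ j‖ ≤ ‖f x - μ l‖).min' (by
    have hk : 0 < k := Nat.pos_of_ne_zero (NeZero.ne k)
    obtain ⟨j, -, hj⟩ := Finset.exists_min_image (Finset.univ : Finset (Fin k))
      (fun j => ‖f x - μ j‖) ⟨⟨0, hk⟩, Finset.mem_univ _⟩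
    exact ⟨j, Finset.mem_filter.mpr ⟨Finset.mem_univ _, fun l => hj l (Finset.mem_univ _)⟩⟩)

/-- The Voronoi `k`-clustering of `X` induced by `(f, μ)`, ties broken by smallest index. -/
def voronoiClustering [NeZero k] (f : X → Euc n) (μ : Fin k → Euc n) : Fin k → Finset X :=
  fun i => Finset.univ.filter fun x => nearestIdx f μ x = i

/-- `f` has a unique optimal k-means clustering `Cf`: minimizers of the center-based cost
exist and all of them induce the same Voronoi clustering, namely `Cf`. -/
def HasUniqueOptClustering [NeZero k] (f : X → Euc n) (Cf : Fin k → Finset X) : Prop :=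
  (∃ μ : Fin k → Euc n, ∀ ν, costCenters k f μ ≤ costCenters k f ν) ∧
  ∀ μ : Fin k → Euc n, (∀ ν, costCenters k f μ ≤ costCenters k f ν) →
    voronoiClustering f μ = Cf

/-- `f` has an `(η, ε)`-unique k-means solution on `X`, with optimal clustering `Cf`. -/
def HasUniqueSolution [NeZero k] (f : X → Euc n) (Cf : Fin k → Finset X) (η ε : ℝ) : Prop :=
  HasUniqueOptClustering f Cf ∧
  ∀ P : Fin k → Finset X, IsClustering k P →
    costClustering k f P < costClustering k f Cf + η → clusterDiff k Cf P < ε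

/-- `L₁` distance `d_{L1}^X` between two functions on `X`. -/
def dL1 {E : Type*} [SeminormedAddGroup E] (f g : X → E) : ℝ :=
  (1 / (Fintype.card X : ℝ)) * ∑ x, ‖f x - g x‖

/-- The indicator function `h_σ^{f₁,f₂}` of `∪_i (C¹_i Δ C²_{σ(i)})`. -/
def indSymmDiff (C₁ C₂ : Fin k → Finset X) (σ : Equiv.Perm (Fin k)) : X → ℝ :=
  fun x => if x ∈ Finset.univ.biUnion (fun i => C₁ i ∆ C₂ (σ i)) then 1 else 0

/-- The class `H^F`, where `Cf f` is the optimal clustering of `f`. -/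
def HF (F : Set (X → Euc n)) (Cf : (X → Euc n) → Fin k → Finset X) : Set (X → ℝ) :=
  {h | ∃ f₁ ∈ F, ∃ f₂ ∈ F, ∃ σ : Equiv.Perm (Fin k), h = indSymmDiff (Cf f₁) (Cf f₂) σ}

/-- Internal covering number `N(G, d, r)`. -/
def coveringNumber {α : Type*} (G : Set α) (d : α → α → ℝ) (r : ℝ) : ℕ :=
  sInf {m : ℕ | ∃ T : Finset α, ↑T ⊆ G ∧ T.card = m ∧ ∀ g ∈ G, ∃ t ∈ T, d g t ≤ r}

/-- External covering number `N_ext(G, d, r)`. -/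
def extCoveringNumber {α : Type*} (G : Set α) (d : α → α → ℝ) (r : ℝ) : ℕ :=
  sInf {m : ℕ | ∃ T : Finset α, T.card = m ∧ ∀ g ∈ G, ∃ t ∈ T, d g t ≤ r}

/-- `G` pseudo-shatters the finite set `S`. -/
def PseudoShatters (G : Set (X → ℝ)) (S : Finset X) : Prop :=
  ∃ r : X → ℝ, ∀ b : X → Bool, ∃ g ∈ G, ∀ x ∈ S, (r x < g x ↔ b x = true)

/-- Pseudo-dimension of a class of real-valued functions. -/
def pdim (G : Set (X → ℝ)) : ℕ :=
  sSup {m : ℕ | ∃ S : Finset X, S.card = m ∧ PseudoShatters G S}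

/-- The class of `i`-th coordinate functions of members of `F`. -/
def coordClass (F : Set (X → Euc n)) (i : Fin n) : Set (X → ℝ) :=
  {g | ∃ f ∈ F, g = fun x => f x i}

/-- Vector-valued pseudo-dimension `Pdim(F) = n · max_i Pdim(F_i)`. -/
def vPdim (n : ℕ) (F : Set (X → Euc n)) : ℕ :=
  n * Finset.univ.sup fun i : Fin n => pdim (coordClass F i)


section Geo
variable {n : ℕ}

lemma proj_le (v μ : Euc n) (hv : ‖v‖ ≤ 1) (hμ : 1 ≤ ‖μ‖) :
    ‖v - ‖μ‖⁻¹ • μ‖ ≤ ‖v - μ‖ := by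
  have hμ0 : (0:ℝ) < ‖μ‖ := lt_of_lt_of_le one_pos hμ
  have ht : ‖μ‖⁻¹ * ‖μ‖ = 1 := inv_mul_cancel₀ (ne_of_gt hμ0)
  have hinner : ⟪v, μ⟫ ≤ ‖v‖ * ‖μ‖ := real_inner_le_norm v μ
  have h1 : ‖v - ‖μ‖⁻¹ • μ‖ ^ 2 = ‖v‖ ^ 2 - 2 * (‖μ‖⁻¹ * ⟪v, μ⟫) + ‖‖μ‖⁻¹ • μ‖ ^ 2 := by
    rw [@norm_sub_sq_real, real_inner_smul_right]
  have h2 : ‖v - μ‖ ^ 2 = ‖v‖ ^ 2 - 2 * ⟪v, μ⟫ + ‖μ‖ ^ 2 := norm_sub_sq_real v μ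
  have h3 : ‖‖μ‖⁻¹ • μ‖ = 1 := by
    rw [norm_smul, norm_inv, norm_norm]; exact ht
  have hsq : ‖v - ‖μ‖⁻¹ • μ‖ ^ 2 ≤ ‖v - μ‖ ^ 2 := by
    rw [h1, h2, h3]
    have hti : ‖μ‖⁻¹ ≤ 1 := by
      rw [inv_le_one_iff₀]; right; exact hμ
    have hti0 : (0:ℝ) < ‖μ‖⁻¹ := inv_pos.mpr hμ0
    nlinarith [sq_nonneg (‖μ‖ - 1), norm_nonneg v]
  exact le_of_sq_le_sq hsq (norm_nonneg _)

lemma sq_bound (a b μ : Euc n) (ha : ‖a‖ ≤ 1) (hb : ‖b‖ ≤ 1) (hμ : ‖μ‖ ≤ 1) :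
    ‖a - μ‖ ^ 2 ≤ ‖b - μ‖ ^ 2 + 4 * ‖a - b‖ := by
  have haμ : ‖a - μ‖ ≤ 2 := le_trans (norm_sub_le a μ) (by linarith)
  have hbμ : ‖b - μ‖ ≤ 2 := le_trans (norm_sub_le b μ) (by linarith)
  have htri : ‖a - μ‖ ≤ ‖b - μ‖ + ‖a - b‖ := by
    calc ‖a - μ‖ = ‖(a - b) + (b - μ)‖ := by rw [sub_add_sub_cancel]
      _ ≤ ‖a - b‖ + ‖b - μ‖ := norm_add_le _ _
      _ = ‖b - μ‖ + ‖a - b‖ := by ring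
  rcases le_or_gt ‖a - μ‖ ‖b - μ‖ with h | h
  · nlinarith [norm_nonneg (a - b), norm_nonneg (a - μ), norm_nonneg (b - μ)]
  · nlinarith [norm_nonneg (a - b), norm_nonneg (a - μ), norm_nonneg (b - μ)]

lemma exists_proj (μ : Euc n) :
    ∃ μ' : Euc n, ‖μ'‖ ≤ 1 ∧ ∀ v : Euc n, ‖v‖ ≤ 1 → ‖v - μ'‖ ≤ ‖v - μ‖ := by
  rcases le_or_gt ‖μ‖ 1 with h | h
  · exact ⟨μ, h, fun v _ => le_refl _⟩
  · refine ⟨‖μ‖⁻¹ • μ, ?_, fun v hv => proj_le v μ hv h.le⟩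
    rw [norm_smul, norm_inv, norm_norm, inv_mul_cancel₀ (by positivity)]

end Geo
section AuxLemmas

open Finset

variable {X : Type*} [Fintype X] [DecidableEq X] {n k : ℕ}

lemma sumInf_bddBelow (s : Finset X) (f : X → Euc n) :
    BddBelow (Set.range fun μ : Euc n => ∑ x ∈ s, ‖f x - μ‖ ^ 2) := by
  refine ⟨0, fun y hy => ?_⟩
  obtain ⟨μ, rfl⟩ := hy
  positivity

lemma sumInf_le (s : Finset X) (f : X → Euc n) (μ : Euc n) :
    (⨅ ν : Euc n, ∑ x ∈ s, ‖f x - ν‖ ^ 2) ≤ ∑ x ∈ s, ‖f x - μ‖ ^ 2 :=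
  ciInf_le (sumInf_bddBelow s f) μ

lemma sumInf_perturb (s : Finset X) (f g : X → Euc n)
    (hf : ∀ x, ‖f x‖ ≤ 1) (hg : ∀ x, ‖g x‖ ≤ 1) :
    (⨅ μ : Euc n, ∑ x ∈ s, ‖f x - μ‖ ^ 2) ≤
      (⨅ μ : Euc n, ∑ x ∈ s, ‖g x - μ‖ ^ 2) + 4 * ∑ x ∈ s, ‖f x - g x‖ := by
  refine le_of_forall_pos_le_add fun δ hδ => ?_
  have hlt : (⨅ μ : Euc n, ∑ x ∈ s, ‖g x - μ‖ ^ 2) <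
      (⨅ μ : Euc n, ∑ x ∈ s, ‖g x - μ‖ ^ 2) + δ := lt_add_of_pos_right _ hδ
  obtain ⟨μ, hμ⟩ := exists_lt_of_ciInf_lt hlt
  obtain ⟨μ', hμ'1, hμ'2⟩ := exists_proj μ
  have hgle : ∑ x ∈ s, ‖g x - μ'‖ ^ 2 ≤ ∑ x ∈ s, ‖g x - μ‖ ^ 2 := by
    refine Finset.sum_le_sum fun x _ => ?_
    have := hμ'2 (g x) (hg x)
    nlinarith [norm_nonneg (g x - μ'), norm_nonneg (g x - μ)]
  have hfle : ∑ x ∈ s, ‖f x - μ'‖ ^ 2 ≤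
      ∑ x ∈ s, ‖g x - μ'‖ ^ 2 + 4 * ∑ x ∈ s, ‖f x - g x‖ := by
    rw [Finset.mul_sum, ← Finset.sum_add_distrib]
    exact Finset.sum_le_sum fun x _ => sq_bound (f x) (g x) μ' (hf x) (hg x) hμ'1
  calc (⨅ ν : Euc n, ∑ x ∈ s, ‖f x - ν‖ ^ 2) ≤ ∑ x ∈ s, ‖f x - μ'‖ ^ 2 := sumInf_le s f μ'
    _ ≤ ∑ x ∈ s, ‖g x - μ'‖ ^ 2 + 4 * ∑ x ∈ s, ‖f x - g x‖ := hfle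
    _ ≤ ∑ x ∈ s, ‖g x - μ‖ ^ 2 + 4 * ∑ x ∈ s, ‖f x - g x‖ := by linarith
    _ ≤ (⨅ μ : Euc n, ∑ x ∈ s, ‖g x - μ‖ ^ 2) + δ + 4 * ∑ x ∈ s, ‖f x - g x‖ := by linarith
    _ = (⨅ μ : Euc n, ∑ x ∈ s, ‖g x - μ‖ ^ 2) + 4 * ∑ x ∈ s, ‖f x - g x‖ + δ := by ring

lemma clustering_sum (C : Fin k → Finset X) (hC : IsClustering k C) (g : X → ℝ) :
    ∑ i, ∑ x ∈ C i, g x = ∑ x, g x := by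
  rw [← hC.2, Finset.sum_biUnion]
  intro i _ j _ hij
  exact hC.1 i j hij

end AuxLemmas

section Aux2

open Finset

variable {X : Type*} [Fintype X] [DecidableEq X] {n k : ℕ} [NeZero k]

lemma nearest_min (f : X → Euc n) (μ : Fin k → Euc n) (x : X) (l : Fin k) :
    ‖f x - μ (nearestIdx f μ x)‖ ≤ ‖f x - μ l‖ := by
  have h : nearestIdx f μ x ∈
      (Finset.univ.filter fun j => ∀ l, ‖f x - μ j‖ ≤ ‖f x - μ l‖) := by
    rw [nearestIdx]; exact Finset.min'_mem _ _
  rw [Finset.mem_filter] at h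
  exact h.2 l

lemma iInf_sq_bddBelow (f : X → Euc n) (μ : Fin k → Euc n) (x : X) :
    BddBelow (Set.range fun j : Fin k => ‖f x - μ j‖ ^ 2) := by
  refine ⟨0, fun y hy => ?_⟩; obtain ⟨j, rfl⟩ := hy; positivity

lemma iInf_eq_nearest (f : X → Euc n) (μ : Fin k → Euc n) (x : X) :
    (⨅ j : Fin k, ‖f x - μ j‖ ^ 2) = ‖f x - μ (nearestIdx f μ x)‖ ^ 2 := by
  refine le_antisymm (ciInf_le (iInf_sq_bddBelow f μ x) _) (le_ciInf fun j => ?_)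
  have := nearest_min f μ x j
  nlinarith [norm_nonneg (f x - μ (nearestIdx f μ x)), norm_nonneg (f x - μ j)]

lemma voronoi_isClustering (f : X → Euc n) (μ : Fin k → Euc n) :
    IsClustering k (voronoiClustering f μ) := by
  constructor
  · intro i j hij
    rw [Finset.disjoint_left]
    intro x hx hx'
    rw [voronoiClustering, Finset.mem_filter] at hx hx'
    exact hij (hx.2 ▸ hx'.2)
  · ext x
    simp only [Finset.mem_biUnion, Finset.mem_univ, iff_true]
    exact ⟨nearestIdx f μ x, by simp [voronoiClustering]⟩

lemma cost_voronoi_le [Nonempty X] (f : X → Euc n) (μ : Fin k → Euc n)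
    (hopt : ∀ ν, costCenters k f μ ≤ costCenters k f ν)
    (P : Fin k → Finset X) (hP : IsClustering k P) :
    costClustering k f (voronoiClustering f μ) ≤ costClustering k f P := by
  have hN : (0:ℝ) ≤ 1 / (Fintype.card X : ℝ) := by positivity
  -- Step (i): costClustering (voronoi) ≤ costCenters μ
  have step1 : costClustering k f (voronoiClustering f μ) ≤ costCenters k f μ := by
    rw [costClustering, costCenters]
    apply mul_le_mul_of_nonneg_left _ hN
    have hrw : ∑ x, (⨅ j : Fin k, ‖f x - μ j‖ ^ 2) =
        ∑ i, ∑ x ∈ voronoiClustering f μ i, (⨅ j : Fin k, ‖f x - μ j‖ ^ 2) :=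
      (clustering_sum _ (voronoi_isClustering f μ) _).symm
    rw [hrw]
    refine Finset.sum_le_sum fun i _ => ?_
    calc (⨅ ν : Euc n, ∑ x ∈ voronoiClustering f μ i, ‖f x - ν‖ ^ 2) ≤
          ∑ x ∈ voronoiClustering f μ i, ‖f x - μ i‖ ^ 2 := sumInf_le _ f (μ i)
      _ = ∑ x ∈ voronoiClustering f μ i, ⨅ j : Fin k, ‖f x - μ j‖ ^ 2 := by
          refine Finset.sum_congr rfl fun x hx => ?_
          rw [voronoiClustering, Finset.mem_filter] at hx
          rw [iInf_eq_nearest, hx.2]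
  -- Step (ii): costCenters μ ≤ costClustering P
  have step2 : costCenters k f μ ≤ costClustering k f P := by
    refine le_of_forall_pos_le_add fun δ hδ => ?_
    have hk : (0:ℕ) < k := Nat.pos_of_ne_zero (NeZero.ne k)
    have hX : (0:ℝ) < (Fintype.card X : ℝ) := by
      exact_mod_cast Fintype.card_pos
    set δ' : ℝ := δ * (Fintype.card X : ℝ) / k with hδ'def
    have hδ' : 0 < δ' := by positivity
    have hchoice : ∀ i : Fin k, ∃ νi : Euc n,
        ∑ x ∈ P i, ‖f x - νi‖ ^ 2 < (⨅ ν : Euc n, ∑ x ∈ P i, ‖f x - ν‖ ^ 2) + δ' := by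
      intro i
      exact exists_lt_of_ciInf_lt (lt_add_of_pos_right _ hδ')
    choose ν hν using hchoice
    have key : ∑ x, (⨅ j : Fin k, ‖f x - ν j‖ ^ 2) ≤
        (∑ i, ⨅ m : Euc n, ∑ x ∈ P i, ‖f x - m‖ ^ 2) + k * δ' := by
      have h1 : ∑ x, (⨅ j : Fin k, ‖f x - ν j‖ ^ 2) =
          ∑ i, ∑ x ∈ P i, (⨅ j : Fin k, ‖f x - ν j‖ ^ 2) := (clustering_sum P hP _).symm
      rw [h1]
      calc ∑ i, ∑ x ∈ P i, (⨅ j : Fin k, ‖f x - ν j‖ ^ 2)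
          ≤ ∑ i, ∑ x ∈ P i, ‖f x - ν i‖ ^ 2 := by
            refine Finset.sum_le_sum fun i _ => Finset.sum_le_sum fun x _ =>
              ciInf_le (iInf_sq_bddBelow f ν x) i
        _ ≤ ∑ i, ((⨅ m : Euc n, ∑ x ∈ P i, ‖f x - m‖ ^ 2) + δ') := by
            exact Finset.sum_le_sum fun i _ => (hν i).le
        _ = (∑ i, ⨅ m : Euc n, ∑ x ∈ P i, ‖f x - m‖ ^ 2) + k * δ' := by
            rw [Finset.sum_add_distrib]; simp [mul_comm]
    calc costCenters k f μ ≤ costCenters k f ν := hopt ν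
      _ = (1 / (Fintype.card X : ℝ)) * ∑ x, (⨅ j : Fin k, ‖f x - ν j‖ ^ 2) := rfl
      _ ≤ (1 / (Fintype.card X : ℝ)) *
            ((∑ i, ⨅ m : Euc n, ∑ x ∈ P i, ‖f x - m‖ ^ 2) + k * δ') :=
          mul_le_mul_of_nonneg_left key hN
      _ = costClustering k f P + (1 / (Fintype.card X : ℝ)) * (k * δ') := by
          rw [costClustering]; ring
      _ = costClustering k f P + δ := by
          rw [hδ'def]
          field_simp
  linarith

end Aux2


section Aux3

open Finset

variable {X : Type*} [Fintype X] [DecidableEq X] {n k : ℕ} [NeZero k]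

lemma costClustering_perturb (f g : X → Euc n)
    (hf : ∀ x, ‖f x‖ ≤ 1) (hg : ∀ x, ‖g x‖ ≤ 1)
    (P : Fin k → Finset X) (hP : IsClustering k P) :
    costClustering k f P ≤ costClustering k g P + 4 * dL1 f g := by
  have hN : (0:ℝ) ≤ 1 / (Fintype.card X : ℝ) := by positivity
  rw [costClustering, costClustering, dL1]
  have key : ∑ i, (⨅ μ : Euc n, ∑ x ∈ P i, ‖f x - μ‖ ^ 2) ≤
      (∑ i, ⨅ μ : Euc n, ∑ x ∈ P i, ‖g x - μ‖ ^ 2) + 4 * ∑ x, ‖f x - g x‖ := by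
    have h1 : ∑ i, (⨅ μ : Euc n, ∑ x ∈ P i, ‖f x - μ‖ ^ 2) ≤
        ∑ i, ((⨅ μ : Euc n, ∑ x ∈ P i, ‖g x - μ‖ ^ 2) + 4 * ∑ x ∈ P i, ‖f x - g x‖) :=
      Finset.sum_le_sum fun i _ => sumInf_perturb (P i) f g hf hg
    have h2 : ∑ i, ∑ x ∈ P i, ‖f x - g x‖ = ∑ x, ‖f x - g x‖ := clustering_sum P hP _
    rw [Finset.sum_add_distrib] at h1
    calc ∑ i, (⨅ μ : Euc n, ∑ x ∈ P i, ‖f x - μ‖ ^ 2)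
        ≤ (∑ i, ⨅ μ : Euc n, ∑ x ∈ P i, ‖g x - μ‖ ^ 2) +
            ∑ i, 4 * ∑ x ∈ P i, ‖f x - g x‖ := h1
      _ = (∑ i, ⨅ μ : Euc n, ∑ x ∈ P i, ‖g x - μ‖ ^ 2) + 4 * ∑ x, ‖f x - g x‖ := by
          rw [← Finset.mul_sum, h2]
  calc (1 / (Fintype.card X : ℝ)) * ∑ i, (⨅ μ : Euc n, ∑ x ∈ P i, ‖f x - μ‖ ^ 2)
      ≤ (1 / (Fintype.card X : ℝ)) *
          ((∑ i, ⨅ μ : Euc n, ∑ x ∈ P i, ‖g x - μ‖ ^ 2) + 4 * ∑ x, ‖f x - g x‖) :=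
        mul_le_mul_of_nonneg_left key hN
    _ = (1 / (Fintype.card X : ℝ)) * (∑ i, ⨅ μ : Euc n, ∑ x ∈ P i, ‖g x - μ‖ ^ 2) +
          4 * ((1 / (Fintype.card X : ℝ)) * ∑ x, ‖f x - g x‖) := by ring

lemma dL1_comm {E : Type*} [SeminormedAddGroup E] (f g : X → E) : dL1 f g = dL1 g f := by
  rw [dL1, dL1]
  congr 1
  exact Finset.sum_congr rfl fun x _ => norm_sub_rev _ _

lemma dL1_self {E : Type*} [SeminormedAddGroup E] (f : X → E) : dL1 f f = 0 := by
  simp [dL1]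

lemma dL1_nonneg {E : Type*} [SeminormedAddGroup E] (f g : X → E) : 0 ≤ dL1 f g := by
  rw [dL1]; positivity

/-- Main stability lemma: close functions have close optimal clusterings. -/
lemma close_clusterings [Nonempty X] {η ε : ℝ} (hη : 0 < η)
    (f t : X → Euc n) (hf : ∀ x, ‖f x‖ ≤ 1) (ht : ∀ x, ‖t x‖ ≤ 1)
    (Cff Cft : Fin k → Finset X)
    (huf : HasUniqueSolution f Cff η ε) (hut : HasUniqueSolution t Cft η ε)
    (hd : dL1 f t ≤ η / 12) :
    clusterDiff k Cff Cft < ε := by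
  obtain ⟨⟨⟨μf, hμf⟩, hvf⟩, hsf⟩ := huf
  obtain ⟨⟨⟨μt, hμt⟩, hvt⟩, hst⟩ := hut
  have hCf : IsClustering k Cff := hvf μf hμf ▸ voronoi_isClustering f μf
  have hCt : IsClustering k Cft := hvt μt hμt ▸ voronoi_isClustering t μt
  have h1 : costClustering k f Cft ≤ costClustering k t Cft + 4 * dL1 f t :=
    costClustering_perturb f t hf ht Cft hCt
  have h2 : costClustering k t Cft ≤ costClustering k t Cff := by
    have := cost_voronoi_le t μt hμt Cff hCf
    rwa [hvt μt hμt] at this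
  have h3 : costClustering k t Cff ≤ costClustering k f Cff + 4 * dL1 t f :=
    costClustering_perturb t f ht hf Cff hCf
  have hdd : dL1 t f = dL1 f t := dL1_comm t f
  have hdn : 0 ≤ dL1 f t := dL1_nonneg f t
  have : costClustering k f Cft < costClustering k f Cff + η := by
    rw [hdd] at h3
    have : costClustering k f Cft ≤ costClustering k f Cff + 8 * dL1 f t := by linarith
    linarith
  exact hsf Cft hCt this

/-- Minimizing permutation for `clusterDiff` is attained. -/
lemma clusterDiff_attained (C D : Fin k → Finset X) :
    ∃ τ : Equiv.Perm (Fin k), clusterDiff k C D =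
      (1 / (Fintype.card X : ℝ)) * ∑ i, ((C i ∆ D (τ i)).card : ℝ) := by
  have heq : ∀ σ : Equiv.Perm (Fin k),
      (1 / ((Finset.univ : Finset X).card : ℝ)) *
          ∑ i, (((C i ∩ Finset.univ) ∆ (D (σ i) ∩ Finset.univ)).card : ℝ)
        = (1 / (Fintype.card X : ℝ)) * ∑ i, ((C i ∆ D (σ i)).card : ℝ) := fun σ => by
    simp only [Finset.inter_univ, Finset.card_univ]
  obtain ⟨τ, -, hτ⟩ := Finset.exists_min_image Finset.univ
    (fun σ : Equiv.Perm (Fin k) =>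
      (1 / (Fintype.card X : ℝ)) * ∑ i, ((C i ∆ D (σ i)).card : ℝ))
    Finset.univ_nonempty
  refine ⟨τ, le_antisymm ?_ ?_⟩
  · rw [clusterDiff, clusterDiffOn, ← heq τ]
    refine ciInf_le ⟨0, ?_⟩ τ
    rintro y ⟨σ, rfl⟩
    positivity
  · rw [clusterDiff, clusterDiffOn]
    refine le_ciInf fun σ => ?_
    rw [heq σ]
    exact hτ σ (Finset.mem_univ _)

end Aux3

section Aux4

open Finset

variable {X : Type*} [Fintype X] [DecidableEq X] {n k : ℕ} [NeZero k]

lemma dL1_ind (A B : Finset X) :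
    dL1 (fun x => if x ∈ A then (1:ℝ) else 0) (fun x => if x ∈ B then (1:ℝ) else 0) =
      (1 / (Fintype.card X : ℝ)) * ((A ∆ B).card : ℝ) := by
  rw [dL1]
  congr 1
  have : ∀ x : X, ‖(if x ∈ A then (1:ℝ) else 0) - (if x ∈ B then (1:ℝ) else 0)‖ =
      if x ∈ A ∆ B then (1:ℝ) else 0 := by
    intro x
    by_cases hA : x ∈ A <;> by_cases hB : x ∈ B <;>
      simp [hA, hB, Finset.mem_symmDiff]
  rw [Finset.sum_congr rfl fun x _ => this x, Finset.sum_ite_mem]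
  simp [Finset.univ_inter]

lemma indSymmDiff_eq (C₁ C₂ : Fin k → Finset X) (σ : Equiv.Perm (Fin k)) :
    indSymmDiff C₁ C₂ σ =
      fun x => if x ∈ Finset.univ.biUnion (fun i => C₁ i ∆ C₂ (σ i)) then (1:ℝ) else 0 := rfl

lemma symmDiff_biUnion_subset (C₁ C₂ D₁ D₂ : Fin k → Finset X)
    (σ τ₁ τ₂ : Equiv.Perm (Fin k)) :
    ((Finset.univ.biUnion fun i => C₁ i ∆ C₂ (σ i)) ∆
        (Finset.univ.biUnion fun i => D₁ i ∆ D₂ ((τ₂ * σ * τ₁⁻¹) i))) ⊆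
      Finset.univ.biUnion fun i => (C₁ i ∆ D₁ (τ₁ i)) ∪ (C₂ (σ i) ∆ D₂ (τ₂ (σ i))) := by
  intro x hx
  rw [Finset.mem_symmDiff] at hx
  by_contra hc
  simp only [Finset.mem_biUnion, Finset.mem_univ, true_and, not_exists, Finset.mem_union,
    not_or, Finset.mem_symmDiff, not_and, not_or, not_not] at hc
  have hiff : ∀ i, (x ∈ C₁ i ↔ x ∈ D₁ (τ₁ i)) ∧ (x ∈ C₂ (σ i) ↔ x ∈ D₂ (τ₂ (σ i))) := by
    intro i
    obtain ⟨h1, h2⟩ := hc i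
    constructor
    · constructor
      · intro h; exact (h1.1 h)
      · intro h; exact (h1.2 h)
    · constructor
      · intro h; exact (h2.1 h)
      · intro h; exact (h2.2 h)
  have hmain : (x ∈ Finset.univ.biUnion fun i => C₁ i ∆ C₂ (σ i)) ↔
      (x ∈ Finset.univ.biUnion fun i => D₁ i ∆ D₂ ((τ₂ * σ * τ₁⁻¹) i)) := by
    simp only [Finset.mem_biUnion, Finset.mem_univ, true_and, Finset.mem_symmDiff]
    constructor
    · rintro ⟨i, hi⟩
      refine ⟨τ₁ i, ?_⟩
      have h1 := (hiff i).1
      have h2 := (hiff i).2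
      have hperm : (τ₂ * σ * τ₁⁻¹) (τ₁ i) = τ₂ (σ i) := by
        simp [Equiv.Perm.mul_apply]
      rw [hperm]
      tauto
    · rintro ⟨j, hj⟩
      refine ⟨τ₁.symm j, ?_⟩
      have h1 := (hiff (τ₁.symm j)).1
      have h2 := (hiff (τ₁.symm j)).2
      have hτ : τ₁ (τ₁.symm j) = j := τ₁.apply_symm_apply j
      have hperm : (τ₂ * σ * τ₁⁻¹) j = τ₂ (σ (τ₁.symm j)) := by
        simp [Equiv.Perm.mul_apply]
      rw [hτ] at h1
      rw [hperm] at hj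
      tauto
  rcases hx with ⟨h1, h2⟩ | ⟨h1, h2⟩
  · exact h2 (hmain.mp h1)
  · exact h2 (hmain.mpr h1)

lemma symmDiff_card_bound (C₁ C₂ D₁ D₂ : Fin k → Finset X)
    (σ τ₁ τ₂ : Equiv.Perm (Fin k)) :
    (((Finset.univ.biUnion fun i => C₁ i ∆ C₂ (σ i)) ∆
        (Finset.univ.biUnion fun i => D₁ i ∆ D₂ ((τ₂ * σ * τ₁⁻¹) i))).card : ℝ) ≤
      (∑ i, ((C₁ i ∆ D₁ (τ₁ i)).card : ℝ)) + ∑ i, ((C₂ i ∆ D₂ (τ₂ i)).card : ℝ) := by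
  have h1 := Finset.card_le_card (symmDiff_biUnion_subset C₁ C₂ D₁ D₂ σ τ₁ τ₂)
  have h2 : (Finset.univ.biUnion fun i => (C₁ i ∆ D₁ (τ₁ i)) ∪ (C₂ (σ i) ∆ D₂ (τ₂ (σ i)))).card
      ≤ ∑ i, ((C₁ i ∆ D₁ (τ₁ i)) ∪ (C₂ (σ i) ∆ D₂ (τ₂ (σ i)))).card :=
    Finset.card_biUnion_le
  have h3 : ∀ i : Fin k, ((C₁ i ∆ D₁ (τ₁ i)) ∪ (C₂ (σ i) ∆ D₂ (τ₂ (σ i)))).card ≤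
      (C₁ i ∆ D₁ (τ₁ i)).card + (C₂ (σ i) ∆ D₂ (τ₂ (σ i))).card := fun i =>
    Finset.card_union_le _ _
  have h4' : ∑ i, ((C₂ (σ i) ∆ D₂ (τ₂ (σ i))).card) = ∑ i, ((C₂ i ∆ D₂ (τ₂ i)).card) := by
    exact Fintype.sum_equiv σ (fun i => (C₂ (σ i) ∆ D₂ (τ₂ (σ i))).card)
      (fun i => (C₂ i ∆ D₂ (τ₂ i)).card) (fun i => rfl)
  have : (((Finset.univ.biUnion fun i => C₁ i ∆ C₂ (σ i)) ∆
      (Finset.univ.biUnion fun i => D₁ i ∆ D₂ ((τ₂ * σ * τ₁⁻¹) i))).card : ℕ) ≤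
      (∑ i, (C₁ i ∆ D₁ (τ₁ i)).card) + ∑ i, (C₂ i ∆ D₂ (τ₂ i)).card := by
    calc _ ≤ _ := h1
      _ ≤ _ := h2
      _ ≤ ∑ i, ((C₁ i ∆ D₁ (τ₁ i)).card + (C₂ (σ i) ∆ D₂ (τ₂ (σ i))).card) :=
          Finset.sum_le_sum fun i _ => h3 i
      _ = (∑ i, (C₁ i ∆ D₁ (τ₁ i)).card) + ∑ i, (C₂ (σ i) ∆ D₂ (τ₂ (σ i))).card :=
          Finset.sum_add_distrib
      _ = _ := by rw [h4']
  calc (((Finset.univ.biUnion fun i => C₁ i ∆ C₂ (σ i)) ∆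
      (Finset.univ.biUnion fun i => D₁ i ∆ D₂ ((τ₂ * σ * τ₁⁻¹) i))).card : ℝ)
      ≤ (((∑ i, (C₁ i ∆ D₁ (τ₁ i)).card) + ∑ i, (C₂ i ∆ D₂ (τ₂ i)).card : ℕ) : ℝ) := by
        exact_mod_cast this
    _ = _ := by push_cast; ring

end Aux4

section Aux5

open Finset

variable {X : Type*} [Fintype X] [DecidableEq X] [Nonempty X] {n : ℕ}

lemma dL1_le_dist (f g : X → Euc n) : dL1 f g ≤ dist f g := by
  have hN : (0:ℝ) < (Fintype.card X : ℝ) := by exact_mod_cast Fintype.card_pos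
  rw [dL1]
  have hsum : ∑ x, ‖f x - g x‖ ≤ (Fintype.card X : ℝ) * dist f g := by
    calc ∑ x, ‖f x - g x‖ ≤ ∑ _x : X, dist f g :=
        Finset.sum_le_sum fun x _ => by
          rw [← dist_eq_norm]; exact dist_le_pi_dist f g x
      _ = (Fintype.card X : ℝ) * dist f g := by
        rw [Finset.sum_const, Finset.card_univ, nsmul_eq_mul]
  calc (1 / (Fintype.card X : ℝ)) * ∑ x, ‖f x - g x‖
      ≤ (1 / (Fintype.card X : ℝ)) * ((Fintype.card X : ℝ) * dist f g) := by
        apply mul_le_mul_of_nonneg_left hsum; positivity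
    _ = dist f g := by field_simp

lemma sep_card_bound {r : ℝ} (hr : 0 < r) :
    ∃ M : ℕ, ∀ S : Finset (X → Euc n), (∀ f ∈ S, ∀ x, ‖f x‖ ≤ 1) →
      (∀ f ∈ S, ∀ g ∈ S, f ≠ g → r < dL1 f g) → S.card ≤ M := by
  have hcomp : IsCompact (Metric.closedBall (0 : X → Euc n) 1) := isCompact_closedBall _ _
  have htb := hcomp.totallyBounded
  rw [Metric.totallyBounded_iff] at htb
  obtain ⟨t, htfin, htcov⟩ := htb (r / 2) (by positivity)
  classical
  refine ⟨htfin.toFinset.card, fun S hSb hSsep => ?_⟩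
  have hmem : ∀ f ∈ S, f ∈ Metric.closedBall (0 : X → Euc n) 1 := by
    intro f hf
    rw [Metric.mem_closedBall, dist_zero_right]
    exact pi_norm_le_iff_of_nonneg zero_le_one |>.mpr fun x => hSb f hf x
  have hchoice : ∀ f ∈ S, ∃ c ∈ htfin.toFinset, f ∈ Metric.ball c (r / 2) := by
    intro f hf
    have := htcov (hmem f hf)
    simp only [Set.mem_iUnion] at this
    obtain ⟨c, hc, hfc⟩ := this
    exact ⟨c, htfin.mem_toFinset.mpr hc, hfc⟩
  choose φ hφt hφb using hchoice
  refine Finset.card_le_card_of_injOn (fun f => if h : f ∈ S then φ f h else Classical.arbitrary _)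
    (fun f hf => by simp only [Finset.mem_coe] at hf; simp only [dif_pos hf]; exact hφt f hf) ?_
  intro f hf g hg hfg
  simp only [Finset.mem_coe] at hf hg
  dsimp only at hfg
  rw [dif_pos hf, dif_pos hg] at hfg
  by_contra hne
  have hd : r < dL1 f g := hSsep f hf g hg hne
  have : dist f g < r := by
    have h1 := hφb f hf
    have h2 := hφb g hg
    rw [Metric.mem_ball] at h1 h2
    calc dist f g ≤ dist f (φ f hf) + dist (φ f hf) g := dist_triangle _ _ _
      _ = dist f (φ f hf) + dist (φ g hg) g := by rw [hfg]
      _ < r / 2 + r / 2 := by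
          refine add_lt_add h1 ?_
          rw [dist_comm]; exact h2
      _ = r := by ring
  have := dL1_le_dist f g
  linarith

lemma exists_cover (F : Set (X → Euc n)) (hb : ∀ f ∈ F, ∀ x, ‖f x‖ ≤ 1)
    {r : ℝ} (hr : 0 < r) :
    ∃ T : Finset (X → Euc n), ↑T ⊆ F ∧ ∀ f ∈ F, ∃ t ∈ T, dL1 f t ≤ r := by
  classical
  obtain ⟨M, hM⟩ := sep_card_bound (X := X) (n := n) hr
  set Good : Finset (X → Euc n) → Prop := fun S =>
    ↑S ⊆ F ∧ ∀ f ∈ S, ∀ g ∈ S, f ≠ g → r < dL1 f g with hGood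
  set cards : Set ℕ := {m | ∃ S : Finset (X → Euc n), Good S ∧ S.card = m} with hcards
  have hub : ∀ m ∈ cards, m ≤ M := by
    rintro m ⟨S, ⟨hS1, hS2⟩, rfl⟩
    exact hM S (fun f hf x => hb f (hS1 hf) x) hS2
  have hne : cards.Nonempty := ⟨0, ∅, ⟨by simp, by simp⟩, rfl⟩
  have hbdd : BddAbove cards := ⟨M, fun m hm => hub m hm⟩
  obtain ⟨S, hSgood, hScard⟩ := Nat.sSup_mem hne hbdd
  refine ⟨S, hSgood.1, fun f hf => ?_⟩
  by_contra hc
  push_neg at hc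
  have hfS : f ∉ S := by
    intro hfS
    have := hc f hfS
    rw [dL1_self] at this
    linarith
  have hgood' : Good (insert f S) := by
    constructor
    · intro g hg
      rw [Finset.coe_insert, Set.mem_insert_iff] at hg
      rcases hg with rfl | hg
      · exact hf
      · exact hSgood.1 hg
    · intro a ha b hb hab
      rw [Finset.mem_insert] at ha hb
      rcases ha with rfl | ha <;> rcases hb with rfl | hb
      · exact absurd rfl hab
      · exact hc b hb
      · rw [dL1_comm]; exact hc a ha
      · exact hSgood.2 a ha b hb hab
  have : (insert f S).card ∈ cards := ⟨insert f S, hgood', rfl⟩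
  have hle := le_csSup hbdd this
  rw [Finset.card_insert_of_notMem hfS, hScard] at hle
  omega

end Aux5


/-- covering number of `H^F` bounded by `k! · N(F, d_{L1}^X, η/12)²`. -/
theorem covering_number_HF (X : Type*) [Fintype X] [DecidableEq X] [Nonempty X]
    (n k : ℕ) [NeZero k] (η ε : ℝ) (hη : 0 < η) (hε : 0 < ε)
    (F : Set (X → Euc n)) (hb : ∀ f ∈ F, ∀ x, ‖f x‖ ≤ 1)
    (Cf : (X → Euc n) → Fin k → Finset X)
    (hu : ∀ f ∈ F, HasUniqueSolution f (Cf f) η ε) :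
    coveringNumber (HF F Cf) dL1 (4 * ε) ≤
      Nat.factorial k * (coveringNumber F dL1 (η / 12)) ^ 2 := by
  classical
  have hr0 : 0 < η / 12 := by positivity
  set N := coveringNumber F dL1 (η / 12) with hN
  -- obtain a minimal-cardinality cover `T` of `F`
  have hSFne : {m : ℕ | ∃ T : Finset (X → Euc n), ↑T ⊆ F ∧ T.card = m ∧
      ∀ g ∈ F, ∃ t ∈ T, dL1 g t ≤ η / 12}.Nonempty := by
    obtain ⟨T, h1, h2⟩ := exists_cover F hb hr0
    exact ⟨T.card, T, h1, rfl, h2⟩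
  have hmem : N ∈ {m : ℕ | ∃ T : Finset (X → Euc n), ↑T ⊆ F ∧ T.card = m ∧
      ∀ g ∈ F, ∃ t ∈ T, dL1 g t ≤ η / 12} := Nat.sInf_mem hSFne
  obtain ⟨T, hTF, hTcard, hTcov⟩ := hmem
  -- candidate cover of `HF F Cf`
  set T' : Finset (X → ℝ) := ((T ×ˢ T) ×ˢ (Finset.univ : Finset (Equiv.Perm (Fin k)))).image
      (fun p => indSymmDiff (Cf p.1.1) (Cf p.1.2) p.2) with hT'
  have hT'card : T'.card ≤ Nat.factorial k * N ^ 2 := by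
    calc T'.card ≤ ((T ×ˢ T) ×ˢ (Finset.univ : Finset (Equiv.Perm (Fin k)))).card :=
        Finset.card_image_le
      _ = T.card * T.card * Fintype.card (Equiv.Perm (Fin k)) := by
          rw [Finset.card_product, Finset.card_product, Finset.card_univ]
      _ = Nat.factorial k * N ^ 2 := by
          rw [Fintype.card_perm, Fintype.card_fin, hTcard]; ring
  have hT'sub : ↑T' ⊆ HF F Cf := by
    intro h hh
    rw [hT', Finset.coe_image] at hh
    obtain ⟨⟨⟨t₁, t₂⟩, σ⟩, hp, rfl⟩ := hh
    rw [Finset.mem_coe, Finset.mem_product] at hp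
    obtain ⟨hp1, -⟩ := hp
    rw [Finset.mem_product] at hp1
    exact ⟨t₁, hTF hp1.1, t₂, hTF hp1.2, σ, rfl⟩
  have hT'cov : ∀ g ∈ HF F Cf, ∃ t ∈ T', dL1 g t ≤ 4 * ε := by
    rintro g ⟨f₁, hf₁, f₂, hf₂, σ, rfl⟩
    obtain ⟨t₁, ht₁T, ht₁⟩ := hTcov f₁ hf₁
    obtain ⟨t₂, ht₂T, ht₂⟩ := hTcov f₂ hf₂
    have ht₁F : t₁ ∈ F := hTF ht₁T
    have ht₂F : t₂ ∈ F := hTF ht₂T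
    have hΔ₁ : clusterDiff k (Cf f₁) (Cf t₁) < ε :=
      close_clusterings hη f₁ t₁ (hb f₁ hf₁) (hb t₁ ht₁F) (Cf f₁) (Cf t₁)
        (hu f₁ hf₁) (hu t₁ ht₁F) ht₁
    have hΔ₂ : clusterDiff k (Cf f₂) (Cf t₂) < ε :=
      close_clusterings hη f₂ t₂ (hb f₂ hf₂) (hb t₂ ht₂F) (Cf f₂) (Cf t₂)
        (hu f₂ hf₂) (hu t₂ ht₂F) ht₂
    obtain ⟨τ₁, hτ₁⟩ := clusterDiff_attained (Cf f₁) (Cf t₁)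
    obtain ⟨τ₂, hτ₂⟩ := clusterDiff_attained (Cf f₂) (Cf t₂)
    refine ⟨indSymmDiff (Cf t₁) (Cf t₂) (τ₂ * σ * τ₁⁻¹), ?_, ?_⟩
    · rw [hT']
      refine Finset.mem_image.mpr ⟨⟨⟨t₁, t₂⟩, τ₂ * σ * τ₁⁻¹⟩, ?_, rfl⟩
      rw [Finset.mem_product, Finset.mem_product]
      exact ⟨⟨ht₁T, ht₂T⟩, Finset.mem_univ _⟩
    · have hdl : dL1 (indSymmDiff (Cf f₁) (Cf f₂) σ)
          (indSymmDiff (Cf t₁) (Cf t₂) (τ₂ * σ * τ₁⁻¹)) =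
          (1 / (Fintype.card X : ℝ)) *
            (((Finset.univ.biUnion fun i => Cf f₁ i ∆ Cf f₂ (σ i)) ∆
              (Finset.univ.biUnion fun i => Cf t₁ i ∆ Cf t₂ ((τ₂ * σ * τ₁⁻¹) i))).card : ℝ) :=
        dL1_ind _ _
      have hcb := symmDiff_card_bound (Cf f₁) (Cf f₂) (Cf t₁) (Cf t₂) σ τ₁ τ₂
      have hXpos : (0:ℝ) ≤ 1 / (Fintype.card X : ℝ) := by positivity
      have : dL1 (indSymmDiff (Cf f₁) (Cf f₂) σ)
          (indSymmDiff (Cf t₁) (Cf t₂) (τ₂ * σ * τ₁⁻¹)) ≤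
          clusterDiff k (Cf f₁) (Cf t₁) + clusterDiff k (Cf f₂) (Cf t₂) := by
        rw [hdl, hτ₁, hτ₂]
        calc (1 / (Fintype.card X : ℝ)) * _ ≤ (1 / (Fintype.card X : ℝ)) *
              ((∑ i, ((Cf f₁ i ∆ Cf t₁ (τ₁ i)).card : ℝ)) +
                ∑ i, ((Cf f₂ i ∆ Cf t₂ (τ₂ i)).card : ℝ)) :=
            mul_le_mul_of_nonneg_left hcb hXpos
          _ = (1 / (Fintype.card X : ℝ)) * (∑ i, ((Cf f₁ i ∆ Cf t₁ (τ₁ i)).card : ℝ)) +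
              (1 / (Fintype.card X : ℝ)) * ∑ i, ((Cf f₂ i ∆ Cf t₂ (τ₂ i)).card : ℝ) := by
            ring
      linarith
  calc coveringNumber (HF F Cf) dL1 (4 * ε) ≤ T'.card :=
      Nat.sInf_le ⟨T', hT'sub, rfl, hT'cov⟩
    _ ≤ Nat.factorial k * N ^ 2 := hT'card
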